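/- Let 𝔽_q be a finite field with q elements and 𝔽_{q²} a quadratic extension of 𝔽_q. Let θ be a multiplicative character of 𝔽_{q²} that is trivial on 𝔽_q^× but non-trivial on 𝔽_{q²}^×, and let ω ∈ 𝔽_{q²} \ 𝔽_q. Then Σ_{x∈𝔽_q} θ(x+ω) = −1. -/

import Mathlib

/-- Let `F = 𝔽_q` and `E = 𝔽_{q²}` a quadratic extension. Let `θ` be a
multiplicative character of `E` which is trivial on `F^×` but non-trivial on `E^×`, and let
`ω ∈ E \ F`. Then `Σ_{x ∈ F} θ(x+ω) = −1`. -/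
theorem sum_theta_shift_eq_neg_one
    (F E : Type*) [Field F] [Fintype F] [Field E] [Fintype E] [Algebra F E]
    (q : ℕ) (hFq : Fintype.card F = q) (hEq : Fintype.card E = q ^ 2)
    (θ : MulChar E ℂ) (hθtriv : ∀ x : F, x ≠ 0 → θ (algebraMap F E x) = 1) (hθ : θ ≠ 1)
    (ω : E) (hω : ω ∉ Set.range (algebraMap F E)) :
    ∑ x : F, θ (algebraMap F E x + ω) = -1 := by
  classical
  set ι : F →+* E := algebraMap F E with hι
  have hinj : Function.Injective ι := ι.injective
  have hq2 : 2 ≤ q := by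
    rw [← hFq]
    exact Fintype.one_lt_card
  -- ω ∉ F means x + ω ≠ 0 and more
  have hxω : ∀ x : F, ι x + ω ≠ 0 := by
    intro x h
    exact hω ⟨-x, by rw [map_neg]; linear_combination -h⟩
  -- the injection
  set f : Fˣ × Option F → E := fun p =>
    match p.2 with
    | none => ι p.1
    | some x => ι p.1 * (ι x + ω) with hf
  have hfinj : Function.Injective f := by
    rintro ⟨t, o⟩ ⟨s, o'⟩ h
    clear_value f
    match o, o' with
    | none, none =>
        simp only [hf] at h
        exact congrArg (Prod.mk · none) (Units.ext (hinj h))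
    | none, some y =>
        exfalso
        simp only [hf] at h
        apply hω
        refine ⟨t.1 / s.1 - y, ?_⟩
        have hs : (ι s.1) ≠ 0 := by
          simp [map_eq_zero_iff ι hinj, s.ne_zero]
        simp only [map_sub, map_div₀, map_mul]
        field_simp
        linear_combination h
    | some x, none =>
        exfalso
        simp only [hf] at h
        apply hω
        refine ⟨s.1 / t.1 - x, ?_⟩
        have ht : (ι t.1) ≠ 0 := by
          simp [map_eq_zero_iff ι hinj, t.ne_zero]
        simp only [map_sub, map_div₀, map_mul]
        field_simp
        linear_combination -h
    | some x, some y =>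
        simp only [hf] at h
        have hts : t.1 = s.1 := by
          by_contra hne
          apply hω
          refine ⟨(s.1 * y - t.1 * x) / (t.1 - s.1), ?_⟩
          have hd : ι t.1 - ι s.1 ≠ 0 := by
            intro h0
            exact hne (hinj (by linear_combination h0))
          have : ι (t.1 - s.1) ≠ 0 := by rwa [map_sub]
          simp only [map_sub, map_div₀, map_mul]
          field_simp
          linear_combination -h
        have ht : (ι t.1) ≠ 0 := by
          simp [map_eq_zero_iff ι hinj, t.ne_zero]
        have hts' : ι t.1 = ι s.1 := congrArg ι hts
        have h' : ι t.1 * (ι x + ω) = ι t.1 * (ι y + ω) := by rw [hts'] at h ⊢; exact h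
        have hxy : x = y := hinj (add_right_cancel (mul_left_cancel₀ ht h'))
        simp [Units.ext hts, hxy]
  have hfne : ∀ p, f p ≠ 0 := by
    rintro ⟨t, o⟩
    have ht : (ι t.1) ≠ 0 := by
      simp [map_eq_zero_iff ι hinj, t.ne_zero]
    match o with
    | none => exact ht
    | some x => exact mul_ne_zero ht (hxω x)
  -- the image of f is univ.erase 0
  have hcard : Fintype.card (Fˣ × Option F) = Fintype.card E - 1 := by
    rw [Fintype.card_prod, Fintype.card_units, Fintype.card_option, hFq, hEq]
    have h1 : 1 ≤ q := le_trans one_le_two hq2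
    have : q ^ 2 = (q - 1) * (q + 1) + 1 := by
      obtain ⟨k, rfl⟩ := Nat.exists_eq_add_of_le h1
      simp only [Nat.add_sub_cancel_left]
      ring
    omega
  have himg : (Finset.univ.image f) = Finset.univ.erase (0 : E) := by
    apply Finset.eq_of_subset_of_card_le
    · intro y hy
      simp only [Finset.mem_image] at hy
      obtain ⟨p, _, rfl⟩ := hy
      exact Finset.mem_erase.2 ⟨hfne p, Finset.mem_univ _⟩
    · rw [Finset.card_erase_of_mem (Finset.mem_univ _),
        Finset.card_image_of_injective _ hfinj]
      simp [hcard]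
  -- sum computation
  have hsum0 : ∑ y : E, θ y = 0 := MulChar.sum_eq_zero_of_ne_one hθ
  have hθ0 : θ (0 : E) = 0 := by
    exact θ.map_nonunit (by simp)
  have hsum1 : ∑ p : Fˣ × Option F, θ (f p) = 0 := by
    rw [← Finset.sum_image (fun a _ b _ h => hfinj h), himg,
      Finset.sum_erase _ hθ0]
    exact hsum0
  have hsum2 : ∑ p : Fˣ × Option F, θ (f p)
      = (Fintype.card Fˣ : ℂ) * (1 + ∑ x : F, θ (ι x + ω)) := by
    rw [Fintype.sum_prod_type]
    have : ∀ t : Fˣ, ∑ o : Option F, θ (f (t, o)) = 1 + ∑ x : F, θ (ι x + ω) := by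
      intro t
      rw [Fintype.sum_option]
      have h1 : θ (f (t, none)) = 1 := hθtriv t.1 t.ne_zero
      have h2 : ∀ x : F, θ (f (t, some x)) = θ (ι x + ω) := by
        intro x
        show θ (ι t.1 * (ι x + ω)) = _
        rw [map_mul, hθtriv t.1 t.ne_zero, one_mul]
      rw [h1]
      congr 1
      exact Finset.sum_congr rfl fun x _ => h2 x
    rw [Finset.sum_congr rfl fun t _ => this t, Finset.sum_const,
      nsmul_eq_mul, Finset.card_univ]
  have hcard_ne : (Fintype.card Fˣ : ℂ) ≠ 0 := by
    rw [Fintype.card_units, hFq]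
    have : 1 ≤ q - 1 := by omega
    exact_mod_cast Nat.one_le_iff_ne_zero.mp this
  have := hsum2.symm.trans hsum1
  have h := mul_eq_zero.mp this
  rcases h with h | h
  · exact absurd h hcard_ne
  · linear_combination h
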